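/- arXiv:2310.11705 — 2 statements merged into one kernel-verified Lean document; each statement's English description precedes it below -/
import Mathlib

section
/- Let F be a connected weighted graph on n vertices with weight function w : E(F) → [0,∞), let Δ > 0 and K ∈ ℕ. Then MST(F) ≤ Δ · ∑_{i=0}^{K−1} dr(F^{≤ iΔ/n}) + ∫_{KΔ/n}^∞ (cc(F^{≤x}) − 1) dx. -/
open MeasureTheory

/-- The weight of a minimum spanning tree of the graph `G` with edge weights `w`. -/
noncomputable def MSTweight {V : Type*} [Fintype V] (G : SimpleGraph V) (w : Sym2 V → ℝ) : ℝ :=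
  sInf {x : ℝ | ∃ T : SimpleGraph V, T ≤ G ∧ T.IsTree ∧ x = ∑ᶠ e ∈ T.edgeSet, w e}

/-- The spanning subgraph `F^{≤x}` of `F` consisting of the edges of weight at most `x`. -/
def levelGraph {V : Type*} (F : SimpleGraph V) (w : Sym2 V → ℝ) (x : ℝ) : SimpleGraph V where
  Adj a b := F.Adj a b ∧ w s(a, b) ≤ x
  symm := by
    constructor
    intro a b h
    exact ⟨h.1.symm, by rw [Sym2.eq_swap]; exact h.2⟩
  loopless := ⟨fun a h => F.loopless.irrefl a h.1⟩

section Aux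

open SimpleGraph

variable {V : Type*}

lemma lg_adj {F : SimpleGraph V} {w : Sym2 V → ℝ} {x : ℝ} {a b : V} :
    (levelGraph F w x).Adj a b ↔ F.Adj a b ∧ w s(a, b) ≤ x := Iff.rfl

lemma lg_le (F : SimpleGraph V) (w : Sym2 V → ℝ) (x : ℝ) : levelGraph F w x ≤ F :=
  fun _ _ h => h.1

lemma lg_mono {F : SimpleGraph V} (w : Sym2 V → ℝ) {x y : ℝ} (h : x ≤ y) :
    levelGraph F w x ≤ levelGraph F w y := fun _ _ hab => ⟨hab.1, hab.2.trans h⟩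

lemma lg_mono_graph {F G : SimpleGraph V} (h : F ≤ G) (w : Sym2 V → ℝ) (x : ℝ) :
    levelGraph F w x ≤ levelGraph G w x := fun _ _ hab => ⟨h hab.1, hab.2⟩

lemma mem_lg_edgeSet {F : SimpleGraph V} {w : Sym2 V → ℝ} {x : ℝ} {e : Sym2 V} :
    e ∈ (levelGraph F w x).edgeSet ↔ e ∈ F.edgeSet ∧ w e ≤ x := by
  induction e using Sym2.ind with
  | _ a b => exact Iff.rfl

lemma reach_del {G : SimpleGraph V} {u v a b : V} (h : G.Reachable a b) :
    (G.deleteEdges {s(u,v)}).Reachable a b ∨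
      (((G.deleteEdges {s(u,v)}).Reachable a u ∨ (G.deleteEdges {s(u,v)}).Reachable a v) ∧
       ((G.deleteEdges {s(u,v)}).Reachable b u ∨ (G.deleteEdges {s(u,v)}).Reachable b v)) := by
  obtain ⟨p⟩ := h
  induction p with
  | nil => exact Or.inl (Reachable.refl _)
  | @cons a c b hadj q ih =>
    by_cases he : s(a, c) = s(u, v)
    · rw [Sym2.eq_iff] at he
      have ha : (G.deleteEdges {s(u,v)}).Reachable a u ∨ (G.deleteEdges {s(u,v)}).Reachable a v := by
        rcases he with ⟨rfl, rfl⟩ | ⟨rfl, rfl⟩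
        · exact Or.inl (Reachable.refl _)
        · exact Or.inr (Reachable.refl _)
      have hc : (G.deleteEdges {s(u,v)}).Reachable c u ∨ (G.deleteEdges {s(u,v)}).Reachable c v := by
        rcases he with ⟨rfl, rfl⟩ | ⟨rfl, rfl⟩
        · exact Or.inr (Reachable.refl _)
        · exact Or.inl (Reachable.refl _)
      refine Or.inr ⟨ha, ?_⟩
      rcases ih with hib | ⟨_, hb⟩
      · rcases hc with h1 | h1
        · exact Or.inl (hib.symm.trans h1)
        · exact Or.inr (hib.symm.trans h1)
      · exact hb
    · have hadj' : (G.deleteEdges {s(u,v)}).Adj a c := by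
        rw [SimpleGraph.deleteEdges_adj]
        exact ⟨hadj, by simp [he]⟩
      rcases ih with hib | ⟨hcn, hbn⟩
      · exact Or.inl (hadj'.reachable.trans hib)
      · refine Or.inr ⟨?_, hbn⟩
        rcases hcn with h1 | h1
        · exact Or.inl (hadj'.reachable.trans h1)
        · exact Or.inr (hadj'.reachable.trans h1)

lemma reach_del_full {G : SimpleGraph V} {u v : V}
    (huv : (G.deleteEdges {s(u,v)}).Reachable u v) {a b : V} (h : G.Reachable a b) :
    (G.deleteEdges {s(u,v)}).Reachable a b := by
  rcases reach_del (u := u) (v := v) h with h1 | ⟨ha, hb⟩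
  · exact h1
  rcases ha with ha | ha <;> rcases hb with hb | hb
  · exact ha.trans hb.symm
  · exact ha.trans (huv.trans hb.symm)
  · exact ha.trans (huv.symm.trans hb.symm)
  · exact ha.trans hb.symm

lemma cc_map_surj {G H : SimpleGraph V} (h : G ≤ H) :
    Function.Surjective (ConnectedComponent.map (Hom.ofLE h)) := by
  intro c
  refine c.ind fun v => ⟨G.connectedComponentMk v, ?_⟩
  rfl

lemma card_cc_mono [Finite V] {G H : SimpleGraph V} (h : G ≤ H) :
    Nat.card H.ConnectedComponent ≤ Nat.card G.ConnectedComponent :=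
  Nat.card_le_card_of_surjective _ (cc_map_surj h)

lemma card_cc_conn [Finite V] {G : SimpleGraph V} (h : G.Connected) :
    Nat.card G.ConnectedComponent = 1 := by
  rw [Nat.card_eq_one_iff_unique]
  refine ⟨⟨ConnectedComponent.ind₂ fun a b => ConnectedComponent.sound (h.preconnected a b)⟩, ?_⟩
  have : Nonempty V := h.nonempty
  exact ⟨G.connectedComponentMk (Classical.arbitrary V)⟩

lemma card_cc_le_card [Finite V] (G : SimpleGraph V) :
    Nat.card G.ConnectedComponent ≤ Nat.card V :=
  Nat.card_le_card_of_surjective G.connectedComponentMk fun c => c.ind fun v => ⟨v, rfl⟩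

lemma acyclic_mono {G H : SimpleGraph V} (h : G ≤ H) (hH : H.IsAcyclic) : G.IsAcyclic :=
  fun _v c hc => hH (c.mapLe h) (hc.mapLe h)

lemma card_split (α : Type*) [Finite α] (p : α → Prop) :
    Nat.card α = Nat.card {x // p x} + Nat.card {x // ¬ p x} := by
  classical
  rw [← Nat.card_sum, Nat.card_congr (Equiv.sumCompl p)]

lemma card_cc_delete_bridge [Finite V] {G : SimpleGraph V} {u v : V}
    (hadj : G.Adj u v) (hbr : ¬(G.deleteEdges {s(u,v)}).Reachable u v) :
    Nat.card (G.deleteEdges {s(u,v)}).ConnectedComponent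
      = Nat.card G.ConnectedComponent + 1 := by
  classical
  set G' := G.deleteEdges {s(u,v)} with hG'
  have hle : G' ≤ G := SimpleGraph.deleteEdges_le _
  set φ : G'.ConnectedComponent → G.ConnectedComponent :=
    ConnectedComponent.map (Hom.ofLE hle) with hφ
  have hφmk : ∀ a : V, φ (G'.connectedComponentMk a) = G.connectedComponentMk a := fun a => rfl
  set cu := G.connectedComponentMk u with hcu
  have key : ∀ d : G'.ConnectedComponent, φ d = cu →
      d = G'.connectedComponentMk u ∨ d = G'.connectedComponentMk v := by
    intro d
    refine d.ind fun a ha => ?_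
    rw [hφmk] at ha
    have hru : G.Reachable a u := ConnectedComponent.eq.mp ha
    rcases reach_del (u := u) (v := v) hru with h1 | ⟨ha', _⟩
    · exact Or.inl (ConnectedComponent.sound h1)
    · rcases ha' with h1 | h1
      · exact Or.inl (ConnectedComponent.sound h1)
      · exact Or.inr (ConnectedComponent.sound h1)
  have h2 : Nat.card {d : G'.ConnectedComponent // φ d = cu} = 2 := by
    rw [Nat.card_eq_two_iff]
    refine ⟨⟨G'.connectedComponentMk u, hφmk u⟩, ⟨G'.connectedComponentMk v, ?_⟩, ?_, ?_⟩
    · rw [hφmk, hcu]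
      exact ConnectedComponent.sound hadj.reachable.symm
    · intro hcon
      exact hbr (ConnectedComponent.eq.mp (congrArg Subtype.val hcon))
    · ext ⟨d, hd⟩
      simp only [Set.mem_insert_iff, Set.mem_singleton_iff, Set.mem_univ, iff_true]
      rcases key d hd with h | h
      · exact Or.inl (Subtype.ext h)
      · exact Or.inr (Subtype.ext h)
  have inj : ∀ d₁ d₂ : G'.ConnectedComponent, φ d₁ = φ d₂ → φ d₁ ≠ cu → d₁ = d₂ := by
    refine ConnectedComponent.ind₂ fun a b hab hne => ?_
    rw [hφmk] at hab hne
    rw [hφmk] at hab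
    have hr : G.Reachable a b := ConnectedComponent.eq.mp hab
    rcases reach_del (u := u) (v := v) hr with h1 | ⟨ha', _⟩
    · exact ConnectedComponent.sound h1
    · exfalso
      apply hne
      rcases ha' with h1 | h1
      · exact ConnectedComponent.sound (h1.mono hle)
      · exact ConnectedComponent.sound ((h1.mono hle).trans hadj.symm.reachable)
  have h3 : Nat.card {d : G'.ConnectedComponent // ¬ φ d = cu}
      = Nat.card {c : G.ConnectedComponent // ¬ c = cu} := by
    refine Nat.card_eq_of_bijective (fun d => ⟨φ d.1, d.2⟩) ⟨?_, ?_⟩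
    · rintro ⟨d1, hd1⟩ ⟨d2, hd2⟩ heq
      exact Subtype.ext (inj d1 d2 (congrArg Subtype.val heq) hd1)
    · rintro ⟨c, hc⟩
      revert hc
      refine c.ind fun a hc => ?_
      exact ⟨⟨G'.connectedComponentMk a, by rwa [hφmk]⟩, by simp [hφmk]⟩
  have h4 : Nat.card {c : G.ConnectedComponent // c = cu} = 1 := by
    rw [Nat.card_eq_one_iff_unique]
    exact ⟨⟨by rintro ⟨a, rfl⟩ ⟨b, rfl⟩; rfl⟩, ⟨⟨cu, rfl⟩⟩⟩
  have e1 := card_split G'.ConnectedComponent (fun d => φ d = cu)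
  have e2 := card_split G.ConnectedComponent (fun c => c = cu)
  omega

lemma acyclic_card_aux [Fintype V] :
    ∀ (n : ℕ) (G : SimpleGraph V), G.IsAcyclic → G.edgeSet.ncard = n →
      Nat.card G.ConnectedComponent + G.edgeSet.ncard = Fintype.card V := by
  intro n
  induction n with
  | zero =>
    intro G _ hn
    have h0 : G.edgeSet = ∅ := (Set.ncard_eq_zero G.edgeSet.toFinite).mp hn
    have hbot : G = ⊥ := SimpleGraph.edgeSet_eq_empty.mp h0
    subst hbot
    rw [h0, Set.ncard_empty, add_zero]
    have hb : Function.Bijective ((⊥ : SimpleGraph V).connectedComponentMk) := by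
      constructor
      · intro a b hab
        exact SimpleGraph.reachable_bot.mp (ConnectedComponent.eq.mp hab)
      · exact fun c => c.ind fun v => ⟨v, rfl⟩
    rw [← Nat.card_eq_of_bijective _ hb, Nat.card_eq_fintype_card]
  | succ n ih =>
    intro G hG hn
    have hne : G.edgeSet.Nonempty := by
      rw [Set.nonempty_iff_ne_empty]
      intro h
      rw [h, Set.ncard_empty] at hn
      omega
    obtain ⟨e, he⟩ := hne
    revert he
    induction e using Sym2.ind with
    | _ u v =>
    intro he
    have hadj : G.Adj u v := (SimpleGraph.mem_edgeSet G).mp he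
    have hbr : G.IsBridge s(u, v) := isAcyclic_iff_forall_adj_isBridge.mp hG hadj
    have hbr' : ¬(G.deleteEdges {s(u,v)}).Reachable u v := (SimpleGraph.isBridge_iff.mp hbr)
    have hG'ac : (G.deleteEdges {s(u,v)}).IsAcyclic :=
      acyclic_mono (SimpleGraph.deleteEdges_le _) hG
    have hedge : (G.deleteEdges {s(u,v)}).edgeSet = G.edgeSet \ {s(u,v)} :=
      SimpleGraph.edgeSet_deleteEdges _
    have hcard : (G.deleteEdges {s(u,v)}).edgeSet.ncard = n := by
      rw [hedge, Set.ncard_diff_singleton_of_mem he, hn]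
      omega
    have h1 := ih _ hG'ac hcard
    have h2 := card_cc_delete_bridge hadj hbr'
    omega

lemma acyclic_card [Fintype V] {G : SimpleGraph V} (hG : G.IsAcyclic) :
    Nat.card G.ConnectedComponent + G.edgeSet.ncard = Fintype.card V :=
  acyclic_card_aux G.edgeSet.ncard G hG rfl

lemma kruskal_aux [Fintype V] :
    ∀ (n : ℕ) (F : SimpleGraph V), F.Connected → F.edgeSet.ncard = n →
      ∀ (w : Sym2 V → ℝ), ∃ T : SimpleGraph V, T ≤ F ∧ T.IsTree ∧
        ∀ (x : ℝ) (a b : V), (levelGraph F w x).Reachable a b →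
          (levelGraph T w x).Reachable a b := by
  intro n
  induction n using Nat.strong_induction_on with
  | _ n ih =>
  intro F hconn hn w
  classical
  by_cases hac : F.IsAcyclic
  · exact ⟨F, le_refl F, ⟨hconn, hac⟩, fun _ _ _ h => h⟩
  · unfold SimpleGraph.IsAcyclic at hac
    push_neg at hac
    obtain ⟨v0, c, hc⟩ := hac
    have hcne : c.edges.toFinset.Nonempty := by
      rw [List.toFinset_nonempty_iff]
      intro h
      have h3 := hc.three_le_length
      have h4 := c.length_edges
      rw [h] at h4
      simp at h4
      omega
    obtain ⟨e, hemem, hemax⟩ := Finset.exists_max_image c.edges.toFinset w hcne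
    revert hemem hemax
    induction e using Sym2.ind with
    | _ u v =>
    intro hemem hemax
    have he' : s(u, v) ∈ c.edges := List.mem_toFinset.mp hemem
    have heF : s(u, v) ∈ F.edgeSet := c.edges_subset_edgeSet he'
    have hadj : F.Adj u v := (SimpleGraph.mem_edgeSet F).mp heF
    have hreach_del : (F.deleteEdges {s(u,v)}).Reachable u v :=
      (adj_and_reachable_delete_edges_iff_exists_cycle.mpr ⟨v0, c, hc, he'⟩).2
    have hGconn : (F.deleteEdges {s(u,v)}).Connected := by
      have : Nonempty V := hconn.nonempty
      exact SimpleGraph.Connected.mk fun a b => reach_del_full hreach_del (hconn.preconnected a b)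
    have hGcard : (F.deleteEdges {s(u,v)}).edgeSet.ncard < n := by
      rw [SimpleGraph.edgeSet_deleteEdges, ← hn,
        Set.ncard_diff_singleton_of_mem heF]
      have : F.edgeSet.ncard ≠ 0 := by
        intro h0
        rw [(Set.ncard_eq_zero F.edgeSet.toFinite).mp h0] at heF
        exact heF
      omega
    obtain ⟨T, hTle, hTtree, hTprop⟩ := ih _ hGcard (F.deleteEdges {s(u,v)}) hGconn rfl w
    refine ⟨T, hTle.trans (SimpleGraph.deleteEdges_le _), hTtree, ?_⟩
    intro x a b hab
    apply hTprop
    by_cases hx : w s(u, v) ≤ x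
    · have hsub : ∀ e' ∈ c.edges, e' ∈ (levelGraph F w x).edgeSet := by
        intro e' he2
        rw [mem_lg_edgeSet]
        exact ⟨c.edges_subset_edgeSet he2,
          le_trans (hemax e' (List.mem_toFinset.mpr he2)) hx⟩
      have hc' : (c.transfer (levelGraph F w x) hsub).IsCycle := hc.transfer hsub
      have he'' : s(u, v) ∈ (c.transfer (levelGraph F w x) hsub).edges := by
        rw [SimpleGraph.Walk.edges_transfer]
        exact he'
      have hUV : ((levelGraph F w x).deleteEdges {s(u,v)}).Reachable u v :=
        (adj_and_reachable_delete_edges_iff_exists_cycle.mpr ⟨v0, _, hc', he''⟩).2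
      have hres := reach_del_full hUV hab
      have hEq : (levelGraph F w x).deleteEdges {s(u,v)}
          = levelGraph (F.deleteEdges {s(u,v)}) w x := by
        ext a' b'
        rw [SimpleGraph.deleteEdges_adj, lg_adj, lg_adj, SimpleGraph.deleteEdges_adj]
        tauto
      rwa [hEq] at hres
    · have hEq : levelGraph (F.deleteEdges {s(u,v)}) w x = levelGraph F w x := by
        ext a' b'
        rw [lg_adj, lg_adj, SimpleGraph.deleteEdges_adj]
        simp only [Set.mem_singleton_iff]
        constructor
        · rintro ⟨⟨h1, _⟩, h2⟩; exact ⟨h1, h2⟩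
        · rintro ⟨h1, h2⟩; exact ⟨⟨h1, fun hcon => hx (hcon ▸ h2)⟩, h2⟩
      rwa [hEq]

end Aux

open SimpleGraph in
/-- Riemann-sum upper bound for the minimum spanning tree weight: for a connected `n`-vertex
weighted graph `F`, any `Δ > 0` and any `K ∈ ℕ`,
`MST(F) ≤ Δ·∑_{i=0}^{K−1} dr(F^{≤ iΔ/n}) + ∫_{KΔ/n}^∞ (cc(F^{≤x}) − 1) dx`,
where `cc` is the number of connected components and `dr` the disconnectedness ratio
(`cc` divided by the number `n` of vertices). -/
theorem mst_le_riemann_sum {V : Type*} [Fintype V]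
    (F : SimpleGraph V) (hconn : F.Connected)
    (w : Sym2 V → ℝ) (hw : ∀ e ∈ F.edgeSet, 0 ≤ w e)
    (Δ : ℝ) (hΔ : 0 < Δ) (K : ℕ) :
    MSTweight F w ≤
      Δ * ∑ i ∈ Finset.range K,
          ((Nat.card (levelGraph F w ((i : ℝ) * Δ / (Fintype.card V : ℝ))).ConnectedComponent : ℝ)
            / (Fintype.card V : ℝ))
      + ∫ x in Set.Ioi ((K : ℝ) * Δ / (Fintype.card V : ℝ)),
          ((Nat.card (levelGraph F w x).ConnectedComponent : ℝ) - 1) := by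
  classical
  have hnV : Nonempty V := hconn.nonempty
  simp only [mul_div_assoc]
  set n : ℕ := Fintype.card V with hndef
  have hn0 : 0 < n := Fintype.card_pos
  have hnR : (0:ℝ) < n := by exact_mod_cast hn0
  set δ : ℝ := Δ / n with hδdef
  have hδ : 0 < δ := by positivity
  obtain ⟨T, hTle, hTtree, hTprop⟩ := kruskal_aux F.edgeSet.ncard F hconn rfl w
  set s : Finset (Sym2 V) := T.edgeSet.toFinite.toFinset with hs
  have hsmem : ∀ e, e ∈ s ↔ e ∈ T.edgeSet := fun e => Set.Finite.mem_toFinset _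
  have hwT : ∀ e ∈ s, 0 ≤ w e := fun e he =>
    hw e (SimpleGraph.edgeSet_mono hTle ((hsmem e).mp he))
  set f : ℝ → ℝ := fun x => (Nat.card (levelGraph F w x).ConnectedComponent : ℝ) with hf
  -- T and F level graphs have the same number of components
  have hcardTF : ∀ x : ℝ, Nat.card (levelGraph T w x).ConnectedComponent
      = Nat.card (levelGraph F w x).ConnectedComponent := by
    intro x
    have hle := lg_mono_graph hTle w x
    refine Nat.card_eq_of_bijective (ConnectedComponent.map (Hom.ofLE hle))
      ⟨?_, cc_map_surj hle⟩
    refine ConnectedComponent.ind₂ fun a b hab => ?_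
    simp only [ConnectedComponent.map_mk] at hab
    exact ConnectedComponent.sound (hTprop x a b (ConnectedComponent.eq.mp hab))
  have hfant : ∀ {x y : ℝ}, x ≤ y → f y ≤ f x := fun hxy =>
    Nat.cast_le.mpr (card_cc_mono (lg_mono w hxy))
  -- key pointwise identity
  have hkey : ∀ x : ℝ, ((s.filter (fun e => x < w e)).card : ℝ) = f x - 1 := by
    intro x
    have hLac : (levelGraph T w x).IsAcyclic := acyclic_mono (lg_le T w x) hTtree.2
    have hLn := acyclic_card hLac
    have hTn := acyclic_card hTtree.2
    rw [card_cc_conn hTtree.1] at hTn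
    have hscard : s.card = T.edgeSet.ncard := (Set.ncard_eq_toFinset_card _ _).symm
    have hLedge : (levelGraph T w x).edgeSet.ncard = (s.filter (fun e => w e ≤ x)).card := by
      have : (levelGraph T w x).edgeSet = ↑(s.filter (fun e => w e ≤ x)) := by
        ext e
        simp only [Finset.coe_filter, Set.mem_setOf_eq, Finset.mem_filter, hsmem, mem_lg_edgeSet]
      rw [this, Set.ncard_coe_finset]
    have hfilt : (s.filter (fun e => x < w e)).card + (s.filter (fun e => w e ≤ x)).card
        = s.card := by
      have h0 := Finset.card_filter_add_card_filter_not (s := s)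
        (p := fun e => x < w e)
      have heq : Finset.filter (fun e => ¬ x < w e) s = Finset.filter (fun e => w e ≤ x) s := by
        apply Finset.filter_congr
        intro e _
        simp [not_lt]
      rwa [heq] at h0
    rw [hLedge, hcardTF x] at hLn
    have hge1 : 1 ≤ Nat.card (levelGraph F w x).ConnectedComponent := by
      have : Nonempty (levelGraph F w x).ConnectedComponent :=
        ⟨(levelGraph F w x).connectedComponentMk (Classical.arbitrary V)⟩
      exact Nat.one_le_iff_ne_zero.mpr Nat.card_pos.ne'
    have : (s.filter (fun e => x < w e)).card + 1
        = Nat.card (levelGraph F w x).ConnectedComponent := by omega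
    rw [hf]
    push_cast [← this]
    ring
  -- indicator representation
  set g : ℝ → ℝ := fun x => ∑ e ∈ s, (Set.Iio (w e)).indicator (fun _ => (1:ℝ)) x with hg
  have hgf : ∀ x, g x = f x - 1 := by
    intro x
    rw [hg, ← hkey x]
    simp only [Set.indicator_apply, Set.mem_Iio]
    rw [Finset.sum_boole]
  -- integrability of each indicator on Ioi 0
  have hInd : ∀ e ∈ s, IntegrableOn ((Set.Iio (w e)).indicator (fun _ => (1:ℝ)))
      (Set.Ioi (0:ℝ)) volume := by
    intro e _
    have h1 : Integrable ((Set.Ioo (0:ℝ) (w e)).indicator (fun _ => (1:ℝ))) volume := by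
      rw [integrable_indicator_iff measurableSet_Ioo]
      exact integrableOn_const measure_Ioo_lt_top.ne
    refine (h1.integrableOn).congr_fun ?_ measurableSet_Ioi
    intro x hx
    simp only [Set.indicator_apply, Set.mem_Ioo, Set.mem_Iio, Set.mem_Ioi.mp hx, true_and]
  have hgint : IntegrableOn g (Set.Ioi (0:ℝ)) volume := by
    rw [hg]
    exact integrable_finset_sum s hInd
  -- value of each indicator integral
  have hIval : ∀ e ∈ s, ∫ x in Set.Ioi (0:ℝ), (Set.Iio (w e)).indicator (fun _ => (1:ℝ)) x
      = w e := by
    intro e he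
    rw [setIntegral_indicator measurableSet_Iio, Set.Ioi_inter_Iio, setIntegral_const,
      Real.volume_real_Ioo_of_le (by linarith [hwT e he]), smul_eq_mul, mul_one]
    ring
  have hsum_int : ∑ e ∈ s, w e = ∫ x in Set.Ioi (0:ℝ), g x := by
    rw [hg, integral_finset_sum s hInd]
    exact (Finset.sum_congr rfl hIval).symm
  -- MSTweight bound
  have hMST : MSTweight F w ≤ ∑ e ∈ s, w e := by
    apply csInf_le
    · refine ⟨0, ?_⟩
      rintro y ⟨T', hT'le, _, rfl⟩
      rw [← Set.Finite.coe_toFinset T'.edgeSet.toFinite, finsum_mem_coe_finset]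
      exact Finset.sum_nonneg fun e he => hw e (SimpleGraph.edgeSet_mono hT'le
        ((Set.Finite.mem_toFinset _).mp he))
    · refine ⟨T, hTle, hTtree, ?_⟩
      rw [← Set.Finite.coe_toFinset T.edgeSet.toFinite, finsum_mem_coe_finset]
  -- Riemann sum bound
  have hRiem : ∀ k : ℕ, ∫ x in Set.Ioc (0:ℝ) ((k:ℝ) * δ), g x
      ≤ ∑ i ∈ Finset.range k, δ * f ((i:ℝ) * δ) := by
    intro k
    induction k with
    | zero => simp
    | succ k ihk =>
      have h1 : (0:ℝ) ≤ (k:ℝ) * δ := by positivity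
      have h2 : (k:ℝ) * δ ≤ ((k:ℝ)+1) * δ := by nlinarith [hδ.le]
      have int1 : IntegrableOn g (Set.Ioc (0:ℝ) ((k:ℝ)*δ)) volume :=
        hgint.mono_set Set.Ioc_subset_Ioi_self
      have int2 : IntegrableOn g (Set.Ioc ((k:ℝ)*δ) (((k:ℝ)+1)*δ)) volume :=
        hgint.mono_set (fun x hx => lt_of_le_of_lt h1 hx.1)
      have hcast : ((k+1 : ℕ) : ℝ) = (k:ℝ) + 1 := by push_cast; ring
      rw [hcast, ← Set.Ioc_union_Ioc_eq_Ioc h1 h2,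
        setIntegral_union (Set.Ioc_disjoint_Ioc_of_le le_rfl) measurableSet_Ioc int1 int2,
        Finset.sum_range_succ]
      have hbound : ∫ x in Set.Ioc ((k:ℝ)*δ) (((k:ℝ)+1)*δ), g x ≤ δ * f ((k:ℝ)*δ) := by
        have hc : ∫ x in Set.Ioc ((k:ℝ)*δ) (((k:ℝ)+1)*δ), f ((k:ℝ)*δ)
            = ((((k:ℝ)+1)*δ - (k:ℝ)*δ)) * f ((k:ℝ)*δ) := by
          rw [setIntegral_const, Real.volume_real_Ioc_of_le (by linarith), smul_eq_mul]
        have hmono := setIntegral_mono_on int2 (integrableOn_const (C := f ((k:ℝ)*δ))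
          measure_Ioc_lt_top.ne) measurableSet_Ioc
          (fun x hx => by
            rw [hgf x]
            have := hfant hx.1.le
            linarith)
        calc ∫ x in Set.Ioc ((k:ℝ)*δ) (((k:ℝ)+1)*δ), g x
            ≤ ∫ _x in Set.Ioc ((k:ℝ)*δ) (((k:ℝ)+1)*δ), f ((k:ℝ)*δ) := hmono
          _ = δ * f ((k:ℝ)*δ) := by rw [hc]; ring
      linarith [ihk]
  -- split the integral
  have hc0 : (0:ℝ) ≤ (K:ℝ) * δ := by positivity
  have hsplit : ∫ x in Set.Ioi (0:ℝ), g x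
      = (∫ x in Set.Ioc (0:ℝ) ((K:ℝ)*δ), g x) + ∫ x in Set.Ioi ((K:ℝ)*δ), g x := by
    rw [← setIntegral_union (Set.Ioc_disjoint_Ioi le_rfl) measurableSet_Ioi
      (hgint.mono_set Set.Ioc_subset_Ioi_self) (hgint.mono_set (Set.Ioi_subset_Ioi hc0)),
      Set.Ioc_union_Ioi_eq_Ioi hc0]
  -- the goal's integrand equals g
  have hgoal_int : ∫ x in Set.Ioi ((K:ℝ)*δ), ((Nat.card (levelGraph F w x).ConnectedComponent : ℝ) - 1)
      = ∫ x in Set.Ioi ((K:ℝ)*δ), g x := by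
    apply integral_congr_ae
    filter_upwards with x
    rw [hgf x, hf]
  have hsum_eq : Δ * ∑ i ∈ Finset.range K,
      ((Nat.card (levelGraph F w ((i:ℝ) * δ)).ConnectedComponent : ℝ) / (n : ℝ))
      = ∑ i ∈ Finset.range K, δ * f ((i:ℝ) * δ) := by
    rw [Finset.mul_sum]
    refine Finset.sum_congr rfl fun i _ => ?_
    rw [hf, hδdef]
    ring
  calc MSTweight F w ≤ ∑ e ∈ s, w e := hMST
    _ = ∫ x in Set.Ioi (0:ℝ), g x := hsum_int
    _ = (∫ x in Set.Ioc (0:ℝ) ((K:ℝ)*δ), g x) + ∫ x in Set.Ioi ((K:ℝ)*δ), g x := hsplit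
    _ ≤ (∑ i ∈ Finset.range K, δ * f ((i:ℝ) * δ)) + ∫ x in Set.Ioi ((K:ℝ)*δ), g x := by
        linarith [hRiem K]
    _ = Δ * (∑ i ∈ Finset.range K,
          ((Nat.card (levelGraph F w ((i:ℝ) * δ)).ConnectedComponent : ℝ) / (n : ℝ)))
        + ∫ x in Set.Ioi ((K:ℝ)*δ),
            ((Nat.card (levelGraph F w x).ConnectedComponent : ℝ) - 1) := by
        rw [hsum_eq, hgoal_int]
end

section
/- Let α > 0. Let F and H be two graphs on the same vertex set V with |V| = n and n > 500/α, and suppose H is α-robust. Let F' be the random graph obtained from F by adding, independently, each edge of E(H)∖E(F) with probability 12/(αn). Then with probability at least 1 − n^{−4}, one has cc(F') ≤ 0.6·cc(F) + n^{4/5}. -/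
set_option maxHeartbeats 1000000


open MeasureTheory

/-- The Bernoulli measure on `Bool` with success probability `p` (for `p ∈ [0,1]`). -/
noncomputable def bernoulliMeasure (p : ℝ) : Measure Bool :=
  (ENNReal.ofReal p) • Measure.dirac true + (1 - ENNReal.ofReal p) • Measure.dirac false

/-- The crossing edges of `G` between `U` and its complement, recorded as ordered pairs with
first coordinate in `U`; each crossing edge corresponds to exactly one such pair. -/
def crossPairs {V : Type*} (G : SimpleGraph V) (U : Set V) : Set (V × V) :=
  {p : V × V | p.1 ∈ U ∧ p.2 ∉ U ∧ G.Adj p.1 p.2}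

/-- An `n`-vertex graph `G` is `ρ`-robust if for every `U ⊆ V(G)` the number of edges of `G`
between `U` and its complement is at least `ρ·|U|·(n−|U|)`. -/
def IsRobust {V : Type*} [Fintype V] (ρ : ℝ) (G : SimpleGraph V) : Prop :=
  ∀ U : Set V,
    ρ * (Nat.card U : ℝ) * ((Fintype.card V : ℝ) - (Nat.card U : ℝ))
      ≤ (Nat.card (crossPairs G U) : ℝ)

/-- The graph on `V` whose edges are the elements of `S` selected by `ω`. -/
def selectGraph {V : Type*} (S : Set (Sym2 V)) (ω : Sym2 V → Bool) : SimpleGraph V where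
  Adj a b := a ≠ b ∧ s(a, b) ∈ S ∧ ω s(a, b) = true
  symm := by
    constructor
    intro a b h
    refine ⟨h.1.symm, ?_, ?_⟩ <;> rw [Sym2.eq_swap]
    exacts [h.2.1, h.2.2]
  loopless := ⟨fun a h => h.1 rfl⟩

section Aux

open Finset Real

lemma bernoulliMeasure_false (p : ℝ) :
    bernoulliMeasure p {false} = 1 - ENNReal.ofReal p := by
  simp [bernoulliMeasure, Measure.dirac_apply]

lemma bernoulliMeasure_isProb {p : ℝ} (h1 : p ≤ 1) :
    IsProbabilityMeasure (bernoulliMeasure p) := by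
  constructor
  simp only [bernoulliMeasure, Measure.add_apply, Measure.smul_apply, Measure.dirac_apply,
    Set.mem_univ, Set.indicator_of_mem, Pi.one_apply, smul_eq_mul, mul_one]
  exact add_tsub_cancel_of_le (ENNReal.ofReal_le_one.2 h1)

lemma pi_allFalse {ι : Type*} [Fintype ι] (μf : ι → Measure Bool)
    [∀ i, IsProbabilityMeasure (μf i)] (E : Finset ι) (q : ENNReal)
    (hq : ∀ e ∈ E, μf e {false} = q) :
    Measure.pi μf {ω : ι → Bool | ∀ e ∈ E, ω e = false} = q ^ E.card := by
  classical
  have hset : {ω : ι → Bool | ∀ e ∈ E, ω e = false} =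
      Set.pi Set.univ (fun e => if e ∈ E then {false} else Set.univ) := by
    ext ω
    simp only [Set.mem_setOf_eq, Set.mem_pi, Set.mem_univ, forall_true_left]
    constructor
    · intro h e
      split_ifs with he
      · simpa using h e he
      · trivial
    · intro h e he
      have := h e; rw [if_pos he] at this; simpa using this
  rw [hset, Measure.pi_pi]
  calc ∏ e, μf e (if e ∈ E then {false} else Set.univ)
      = ∏ e, (if e ∈ E then q else 1) := by
        refine Finset.prod_congr rfl fun e _ => ?_
        split_ifs with he
        · exact hq e he
        · exact measure_univ
    _ = q ^ E.card := by
        rw [Finset.prod_ite_mem, Finset.univ_inter, Finset.prod_const]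

lemma two_mul_cc_le {V : Type*} [Fintype V] (F G : SimpleGraph V) (h : F ≤ G) :
    2 * Nat.card G.ConnectedComponent ≤
      Nat.card F.ConnectedComponent +
      Nat.card {K : F.ConnectedComponent //
        ∀ a b : V, F.connectedComponentMk a = K → G.Adj a b → F.connectedComponentMk b = K} := by
  classical
  haveI : Fintype F.ConnectedComponent := Fintype.ofFinite _
  haveI : Fintype G.ConnectedComponent := Fintype.ofFinite _
  set φ : F.ConnectedComponent → G.ConnectedComponent :=
    fun K => K.map (SimpleGraph.Hom.ofLE h) with hφ
  have hφmk : ∀ v : V, φ (F.connectedComponentMk v) = G.connectedComponentMk v := by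
    intro v; simp [hφ, SimpleGraph.ConnectedComponent.map_mk]
  have hsurj : Function.Surjective φ := by
    intro C
    refine C.ind fun v => ⟨F.connectedComponentMk v, hφmk v⟩
  set fib : G.ConnectedComponent → Finset F.ConnectedComponent :=
    fun C => univ.filter fun K => φ K = C with hfib
  have hfib1 : ∀ C, 1 ≤ (fib C).card := by
    intro C; obtain ⟨K, hK⟩ := hsurj C
    exact Finset.card_pos.2 ⟨K, by simp [hfib, hK]⟩
  set A : Finset G.ConnectedComponent := univ.filter fun C => (fib C).card = 1 with hA
  have hsum : ∑ C : G.ConnectedComponent, (fib C).card = Fintype.card F.ConnectedComponent := by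
    rw [← Finset.card_univ]
    exact (Finset.card_eq_sum_card_fiberwise (fun x _ => mem_univ _)).symm
  have h2 : 2 * Fintype.card G.ConnectedComponent ≤
      Fintype.card F.ConnectedComponent + A.card := by
    have hle : ∑ C : G.ConnectedComponent, 2 ≤
        ∑ C : G.ConnectedComponent, ((fib C).card + if C ∈ A then 1 else 0) := by
      refine Finset.sum_le_sum fun C _ => ?_
      by_cases hC : (fib C).card = 1
      · simp [hA, hC]
      · have h2' : 2 ≤ (fib C).card := by
          have := hfib1 C; omega
        exact le_trans h2' (Nat.le_add_right _ _)
    rw [Finset.sum_add_distrib, hsum, Finset.sum_ite_mem, Finset.univ_inter] at hle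
    simp only [Finset.sum_const, smul_eq_mul, mul_one, Finset.card_univ] at hle
    omega
  set badF : Finset F.ConnectedComponent := univ.filter fun K =>
    ∀ a b : V, F.connectedComponentMk a = K → G.Adj a b → F.connectedComponentMk b = K with hbadF
  have hAsub : A ⊆ badF.image φ := by
    intro C hC
    obtain ⟨K, hK⟩ := Finset.card_eq_one.1 (Finset.mem_filter.1 hC).2
    have hKC : φ K = C := by
      have : K ∈ fib C := hK ▸ Finset.mem_singleton_self K
      exact (Finset.mem_filter.1 this).2
    refine Finset.mem_image.2 ⟨K, ?_, hKC⟩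
    refine Finset.mem_filter.2 ⟨mem_univ _, ?_⟩
    intro a b ha hab
    have hb : φ (F.connectedComponentMk b) = C := by
      have hba : G.connectedComponentMk b = G.connectedComponentMk a :=
        (SimpleGraph.ConnectedComponent.connectedComponentMk_eq_of_adj hab).symm
      rw [hφmk, hba, ← hφmk, ha, hKC]
    have : F.connectedComponentMk b ∈ fib C := by
      simp only [hfib, Finset.mem_filter]; exact ⟨mem_univ _, hb⟩
    rw [hK, Finset.mem_singleton] at this
    exact this
  have hbad : A.card ≤ badF.card :=
    le_trans (Finset.card_le_card hAsub) (Finset.card_image_le)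
  have hcards : Nat.card {K : F.ConnectedComponent //
        ∀ a b : V, F.connectedComponentMk a = K → G.Adj a b → F.connectedComponentMk b = K}
      = badF.card := by
    rw [Nat.card_eq_fintype_card, Fintype.card_subtype]
  simp only [Nat.card_eq_fintype_card, hcards] at *
  omega

open Classical in
noncomputable def crossEdges {V : Type*} [Fintype V] (F H : SimpleGraph V)
    (K : F.ConnectedComponent) : Finset (Sym2 V) :=
  Finset.univ.filter fun e => e ∈ H.edgeSet \ F.edgeSet ∧
    ∃ a b : V, e = s(a, b) ∧ F.connectedComponentMk a = K ∧ F.connectedComponentMk b ≠ K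

lemma mem_crossEdges_iff {V : Type*} [Fintype V] {F H : SimpleGraph V}
    {K : F.ConnectedComponent} {e : Sym2 V} :
    e ∈ crossEdges F H K ↔ e ∈ H.edgeSet \ F.edgeSet ∧
      ∃ a b : V, e = s(a, b) ∧ F.connectedComponentMk a = K ∧ F.connectedComponentMk b ≠ K := by
  classical
  simp [crossEdges]

lemma crossEdges_card_ge {V : Type*} [Fintype V] {α : ℝ}
    (F H : SimpleGraph V) (hrob : IsRobust α H) (K : F.ConnectedComponent) :
    α * (Nat.card K.supp : ℝ) * ((Fintype.card V : ℝ) - (Nat.card K.supp : ℝ))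
      ≤ ((crossEdges F H K).card : ℝ) := by
  refine le_trans (hrob K.supp) ?_
  have hle : Nat.card (crossPairs H K.supp) ≤ (crossEdges F H K).card := by
    have key : ∀ p : crossPairs H K.supp,
        s((p : V × V).1, (p : V × V).2) ∈ crossEdges F H K := by
      intro p
      obtain ⟨hU, hnU, hadj⟩ := p.2
      rw [mem_crossEdges_iff]
      refine ⟨⟨hadj, fun hF => ?_⟩, (p : V × V).1, (p : V × V).2, rfl, ?_, ?_⟩
      · refine hnU ?_
        rw [SimpleGraph.ConnectedComponent.mem_supp_iff]
        have h12 : F.connectedComponentMk (p : V × V).1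
            = F.connectedComponentMk (p : V × V).2 :=
          SimpleGraph.ConnectedComponent.connectedComponentMk_eq_of_adj
            ((SimpleGraph.mem_edgeSet F).1 hF)
        rw [← h12]
        exact (SimpleGraph.ConnectedComponent.mem_supp_iff _ _).1 hU
      · exact (SimpleGraph.ConnectedComponent.mem_supp_iff _ _).1 hU
      · exact fun h => hnU ((SimpleGraph.ConnectedComponent.mem_supp_iff _ _).2 h)
    have hinj : Function.Injective
        (fun p : crossPairs H K.supp =>
          (⟨s((p : V × V).1, (p : V × V).2), key p⟩ : {e // e ∈ crossEdges F H K})) := by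
      rintro ⟨⟨a, b⟩, ha, hb, hab⟩ ⟨⟨c, d⟩, hc, hd, hcd⟩ h
      simp only [Subtype.mk.injEq, Sym2.eq_iff] at h
      rcases h with ⟨rfl, rfl⟩ | ⟨rfl, rfl⟩
      · rfl
      · exact absurd hc hb
    have := Nat.card_le_card_of_injective _ hinj
    rwa [Nat.card_eq_finsetCard] at this
  exact_mod_cast hle

lemma final_real (n c t : ℕ) (hbig : (n:ℝ) ^ ((4:ℝ)/5) < 0.4 * n)
    (hc : (n:ℝ) ^ ((4:ℝ)/5) < c)
    (ht1 : 0.2 * c + 2 * (n:ℝ) ^ ((4:ℝ)/5) - 1 < t) (ht0 : 0 < t) (hn0 : 0 < n) :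
    (c.choose t : ℝ) * Real.exp (-(3 * t)) ≤ (((n:ℝ)) ^ 4)⁻¹ := by
  have hnpos : (0:ℝ) < n := by exact_mod_cast hn0
  set u : ℝ := (n:ℝ) ^ ((1:ℝ)/5) with hu
  have hu0 : 0 < u := Real.rpow_pos_of_pos hnpos _
  have hu5 : u ^ (5:ℕ) = n := by
    rw [hu, ← Real.rpow_natCast ((n:ℝ) ^ ((1:ℝ)/5)) 5, ← Real.rpow_mul hnpos.le]
    norm_num
  have hu4 : u ^ (4:ℕ) = (n:ℝ) ^ ((4:ℝ)/5) := by
    rw [hu, ← Real.rpow_natCast ((n:ℝ) ^ ((1:ℝ)/5)) 4, ← Real.rpow_mul hnpos.le]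
    norm_num
  have hbig' : u ^ (4:ℕ) < 0.4 * u ^ (5:ℕ) := by rw [hu4, hu5]; exact hbig
  have hu25 : 2.5 < u := by
    nlinarith [pow_pos hu0 4, pow_pos hu0 5]
  have htlb : 2.2 * u ^ (4:ℕ) - 1 < (t:ℝ) := by
    rw [hu4]; nlinarith [hc, ht1]
  have hu4lb : (39:ℝ) ≤ u ^ (4:ℕ) := by
    have : (2.5:ℝ) ^ (4:ℕ) ≤ u ^ (4:ℕ) := pow_le_pow_left₀ (by norm_num) hu25.le 4
    nlinarith [this]
  have hct : (c:ℝ) ≤ 5 * t := by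
    rw [hu4] at htlb hu4lb
    nlinarith [ht1, hu4lb]
  have htpos : (0:ℝ) < t := by exact_mod_cast ht0
  have hlog5 : Real.log 5 ≤ 2 * Real.log 2 + 1/4 := by
    have h54 : Real.log (5/4) ≤ 5/4 - 1 := Real.log_le_sub_one_of_pos (by norm_num)
    have : Real.log 5 = Real.log 4 + Real.log (5/4) := by
      rw [← Real.log_mul (by norm_num) (by norm_num)]; norm_num
    have h4 : Real.log 4 = 2 * Real.log 2 := by
      rw [show (4:ℝ) = 2 ^ (2:ℕ) by norm_num, Real.log_pow]; push_cast; ring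
    linarith
  have hlog2 : Real.log 2 < 0.6931471808 := Real.log_two_lt_d9
  have hlogn : Real.log n = 5 * Real.log u := by
    rw [← hu5, Real.log_pow]; push_cast; ring
  have hlogu : Real.log u ≤ u - 1 := Real.log_le_sub_one_of_pos hu0
  have hkey : 4 * Real.log n ≤ t * (2 - Real.log 5) := by
    have hcoef : (0.3637 : ℝ) ≤ 2 - Real.log 5 := by linarith
    have h1 : 20 * (u - 1) ≤ (2.2 * u ^ (4:ℕ) - 1) * 0.3637 := by
      have hv : (0:ℝ) ≤ u - 2.5 := by linarith
      nlinarith [hv, mul_nonneg hv hv, mul_nonneg (mul_nonneg hv hv) hv,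
        mul_nonneg (mul_nonneg hv hv) (mul_nonneg hv hv)]
    have h2 : (2.2 * u ^ (4:ℕ) - 1) * 0.3637 ≤ (t:ℝ) * (2 - Real.log 5) := by
      calc (2.2 * u ^ (4:ℕ) - 1) * 0.3637 ≤ (t:ℝ) * 0.3637 := by linarith [htlb]
        _ ≤ (t:ℝ) * (2 - Real.log 5) := mul_le_mul_of_nonneg_left hcoef htpos.le
    calc 4 * Real.log n = 20 * Real.log u := by rw [hlogn]; ring
      _ ≤ 20 * (u - 1) := by linarith
      _ ≤ _ := le_trans h1 h2
  have hn4 : ((n:ℝ)) ^ 4 ≤ (Real.exp 2 / 5) ^ t := by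
    have hl : ((n:ℝ)) ^ 4 = Real.exp (4 * Real.log n) := by
      rw [show (4:ℝ) * Real.log n = Real.log (((n:ℝ)) ^ (4:ℕ)) by
        rw [Real.log_pow]; push_cast; ring, Real.exp_log (by positivity)]
    have hr : (Real.exp 2 / 5) ^ t = Real.exp ((t:ℝ) * (2 - Real.log 5)) := by
      rw [show (2:ℝ) - Real.log 5 = Real.log (Real.exp 2 / 5) by
        rw [Real.log_div (Real.exp_ne_zero 2) (by norm_num), Real.log_exp]]
      rw [show ((t:ℝ)) * Real.log (Real.exp 2 / 5) = Real.log ((Real.exp 2 / 5) ^ t) by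
        rw [Real.log_pow], Real.exp_log (by positivity)]
    rw [hl, hr]
    exact Real.exp_le_exp.2 hkey
  have hchoose : (c.choose t : ℝ) ≤ (5:ℝ) ^ t * Real.exp t := by
    have h1 : (c.choose t : ℝ) ≤ (c:ℝ) ^ t / (t.factorial : ℝ) := Nat.choose_le_pow_div t c
    have h2 : (t:ℝ) ^ t / (t.factorial : ℝ) ≤ Real.exp t :=
      Real.pow_div_factorial_le_exp ((t:ℝ)) (Nat.cast_nonneg t) t
    have h3 : (c:ℝ) ^ t / (t.factorial : ℝ)
        = ((c:ℝ) / t) ^ t * ((t:ℝ) ^ t / (t.factorial : ℝ)) := by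
      field_simp
      rw [div_pow, div_mul_cancel₀ _ (pow_ne_zero _ htpos.ne')]
    have h4 : ((c:ℝ) / t) ^ t ≤ (5:ℝ) ^ t := by
      apply pow_le_pow_left₀ (by positivity)
      rw [div_le_iff₀ htpos]
      linarith [hct]
    calc (c.choose t : ℝ) ≤ ((c:ℝ) / t) ^ t * ((t:ℝ) ^ t / (t.factorial : ℝ)) := by
          rw [← h3]; exact h1
      _ ≤ (5:ℝ) ^ t * Real.exp t := by
          apply mul_le_mul h4 h2 (by positivity) (by positivity)
  have hfin : (c.choose t : ℝ) * Real.exp (-(3 * t)) ≤ (5 * Real.exp (-2)) ^ t := by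
    have heq : (5 * Real.exp (-2)) ^ t = (5:ℝ) ^ t * Real.exp t * Real.exp (-(3 * t)) := by
      rw [mul_pow, ← Real.exp_nat_mul, mul_assoc, ← Real.exp_add]
      congr 1
      push_cast; ring
    rw [heq]
    exact mul_le_mul_of_nonneg_right hchoose (Real.exp_pos _).le
  have ha : (5 * Real.exp (-2) : ℝ) = (Real.exp 2 / 5)⁻¹ := by
    rw [Real.exp_neg]; field_simp
  have hfin2 : (5 * Real.exp (-2)) ^ t ≤ (((n:ℝ)) ^ 4)⁻¹ := by
    rw [ha, inv_pow]
    exact inv_anti₀ (by positivity) hn4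
  exact hfin.trans hfin2

end Aux

open Classical in
/-- Let `F` and `H` be graphs on the same vertex set of size `n > 500/α`, with `H`
`α`-robust.  Add to `F` each edge of `E(H) ∖ E(F)` independently with probability
`12/(αn)`, obtaining `F'`.  Then with probability at least `1 − n⁻⁴` we have
`cc(F') ≤ 0.6·cc(F) + n^{4/5}`. -/
theorem component_count_drop {V : Type*} [Fintype V] [DecidableEq V]
    (α : ℝ) (hα : 0 < α) (F H : SimpleGraph V)
    (hn : 500 / α < (Fintype.card V : ℝ)) (hrob : IsRobust α H) :
    1 - ((Fintype.card V : ENNReal) ^ 4)⁻¹ ≤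
      (Measure.pi (fun e : Sym2 V =>
          if e ∈ H.edgeSet \ F.edgeSet
          then bernoulliMeasure (12 / (α * (Fintype.card V : ℝ)))
          else Measure.dirac false))
        {ω : Sym2 V → Bool |
          (Nat.card (F ⊔ selectGraph (H.edgeSet \ F.edgeSet) ω).ConnectedComponent : ℝ)
            ≤ 0.6 * (Nat.card F.ConnectedComponent : ℝ)
              + (Fintype.card V : ℝ) ^ ((4 : ℝ) / 5)} := by
    classical
  set n := Fintype.card V with hn_def
  set p : ℝ := 12 / (α * (n : ℝ)) with hp_def
  have hn0 : (0:ℝ) < (n:ℝ) := lt_of_le_of_lt (by positivity) hn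
  have hnn0 : 0 < n := by exact_mod_cast hn0
  have hαn : (500:ℝ) < α * n := by
    rw [div_lt_iff₀ hα] at hn
    nlinarith [hn]
  have hp0 : 0 < p := by rw [hp_def]; positivity
  have hp1 : p ≤ 1 := by
    rw [hp_def, div_le_one (by linarith)]; linarith
  set μfac : Sym2 V → Measure Bool := fun e =>
    if e ∈ H.edgeSet \ F.edgeSet then bernoulliMeasure p else Measure.dirac false with hμfac
  haveI hprob : ∀ e, IsProbabilityMeasure (μfac e) := by
    intro e
    rw [hμfac]
    dsimp only
    split_ifs with h
    · exact bernoulliMeasure_isProb hp1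
    · infer_instance
  set μ := Measure.pi μfac with hμ
  haveI : IsProbabilityMeasure μ := by rw [hμ]; infer_instance
  set c := Nat.card F.ConnectedComponent with hc_def
  set Ev := {ω : Sym2 V → Bool |
      (Nat.card (F ⊔ selectGraph (H.edgeSet \ F.edgeSet) ω).ConnectedComponent : ℝ)
        ≤ 0.6 * (c : ℝ) + (n:ℝ) ^ ((4 : ℝ) / 5)} with hEv
  -- component count of supergraph
  have hcc_le : ∀ ω : Sym2 V → Bool,
      Nat.card (F ⊔ selectGraph (H.edgeSet \ F.edgeSet) ω).ConnectedComponent ≤ c := by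
    intro ω
    rw [hc_def]
    refine Nat.card_le_card_of_surjective
      (fun K => K.map (SimpleGraph.Hom.ofLE (le_sup_left :
        F ≤ F ⊔ selectGraph (H.edgeSet \ F.edgeSet) ω))) ?_
    intro C
    refine C.ind fun v => ⟨F.connectedComponentMk v, ?_⟩
    simp [SimpleGraph.ConnectedComponent.map_mk]
  have hcV : c ≤ n := by
    rw [hc_def, hn_def, ← Nat.card_eq_fintype_card]
    exact Nat.card_le_card_of_surjective (fun v => F.connectedComponentMk v)
      (fun C => C.ind fun v => ⟨v, rfl⟩)
  -- main case distinction
  by_cases htriv : (c:ℝ) ≤ (n:ℝ) ^ ((4:ℝ)/5) ∨ 0.4 * (n:ℝ) ≤ (n:ℝ) ^ ((4:ℝ)/5)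
  · have hEvuniv : Ev = Set.univ := by
      ext ω
      simp only [hEv, Set.mem_setOf_eq, Set.mem_univ, iff_true]
      have h1 : (Nat.card (F ⊔ selectGraph (H.edgeSet \ F.edgeSet) ω).ConnectedComponent : ℝ)
          ≤ (c:ℝ) := by exact_mod_cast hcc_le ω
      have hc0 : (0:ℝ) ≤ (c:ℝ) := Nat.cast_nonneg c
      rcases htriv with h | h
      · linarith
      · have h2 : (c:ℝ) ≤ (n:ℝ) := by exact_mod_cast hcV
        linarith
    rw [hEvuniv, measure_univ]
    exact tsub_le_self
  push_neg at htriv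
  obtain ⟨hc4, hbign⟩ := htriv
  -- setup for the main argument
  haveI : Fintype F.ConnectedComponent := Fintype.ofFinite _
  have hcF : c = Fintype.card F.ConnectedComponent := by
    rw [hc_def, Nat.card_eq_fintype_card]
  set smallF : Finset F.ConnectedComponent :=
    Finset.univ.filter (fun K => 2 * Nat.card K.supp ≤ n) with hsmallF
  set x : ℝ := 0.2 * c + 2 * (n:ℝ) ^ ((4:ℝ)/5) - 1 with hx_def
  have hrp1 : (1:ℝ) ≤ (n:ℝ) ^ ((4:ℝ)/5) := by
    exact Real.one_le_rpow (by exact_mod_cast hnn0) (by norm_num)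
  have hx0 : 0 ≤ x := by
    rw [hx_def]
    have : (0:ℝ) ≤ 0.2 * c := by positivity
    linarith
  set t : ℕ := ⌊x⌋₊ + 1 with ht_def
  have htx : x < (t:ℕ) := by
    rw [ht_def]
    exact_mod_cast Nat.lt_floor_add_one x
  have ht0 : 0 < t := by rw [ht_def]; omega
  set ES : Finset F.ConnectedComponent → Finset (Sym2 V) :=
    fun S => S.biUnion (crossEdges F H) with hES
  set AS : Finset F.ConnectedComponent → Set (Sym2 V → Bool) :=
    fun S => {ω : Sym2 V → Bool | ∀ e ∈ ES S, ω e = false} with hAS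
  -- inclusion of the bad event in a union
  have hsub : Evᶜ ⊆ ⋃ S ∈ smallF.powersetCard t, AS S := by
    intro ω hω
    simp only [hEv, Set.mem_compl_iff, Set.mem_setOf_eq, not_le] at hω
    set G' := F ⊔ selectGraph (H.edgeSet \ F.edgeSet) ω with hG'
    have hcount := two_mul_cc_le F G' le_sup_left
    set Bad : Finset F.ConnectedComponent := Finset.univ.filter (fun K =>
      ∀ a b : V, F.connectedComponentMk a = K → G'.Adj a b →
        F.connectedComponentMk b = K) with hBad
    have hBadcard : Nat.card {K : F.ConnectedComponent //
        ∀ a b : V, F.connectedComponentMk a = K → G'.Adj a b →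
          F.connectedComponentMk b = K} = Bad.card := by
      rw [← Nat.card_eq_finsetCard]
      refine Nat.card_congr (Equiv.subtypeEquivRight ?_)
      intro K
      simp [hBad]
    rw [hBadcard, ← hc_def] at hcount
    -- at most one big component
    have hbig1 : (Finset.univ.filter (fun K : F.ConnectedComponent =>
        ¬ 2 * Nat.card K.supp ≤ n)).card ≤ 1 := by
      rw [Finset.card_le_one]
      intro K1 h1 K2 h2
      by_contra hne
      have hd : Disjoint K1.supp K2.supp := by
        rw [Set.disjoint_left]
        intro v hv1 hv2
        rw [SimpleGraph.ConnectedComponent.mem_supp_iff] at hv1 hv2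
        exact hne (by rw [← hv1, ← hv2])
      have hsum : (K1.supp ∪ K2.supp).ncard = K1.supp.ncard + K2.supp.ncard :=
        Set.ncard_union_eq hd (Set.toFinite _) (Set.toFinite _)
      have hle : (K1.supp ∪ K2.supp).ncard ≤ n := by
        rw [hn_def, ← Nat.card_eq_fintype_card, ← Set.ncard_univ]
        exact Set.ncard_le_ncard (Set.subset_univ _) (Set.toFinite _)
      have e1 : Nat.card K1.supp = K1.supp.ncard := Nat.card_coe_set_eq _
      have e2 : Nat.card K2.supp = K2.supp.ncard := Nat.card_coe_set_eq _
      rw [Finset.mem_filter] at h1 h2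
      omega
    have hBadsplit : Bad.card ≤ (Bad ∩ smallF).card + 1 := by
      have hsubBad : Bad ⊆ (Bad ∩ smallF) ∪ (Finset.univ.filter (fun K : F.ConnectedComponent =>
          ¬ 2 * Nat.card K.supp ≤ n)) := by
        intro K hK
        by_cases hKs : 2 * Nat.card K.supp ≤ n
        · exact Finset.mem_union_left _ (Finset.mem_inter.2 ⟨hK,
            Finset.mem_filter.2 ⟨Finset.mem_univ _, hKs⟩⟩)
        · exact Finset.mem_union_right _ (Finset.mem_filter.2 ⟨Finset.mem_univ _, hKs⟩)
      calc Bad.card ≤ ((Bad ∩ smallF) ∪ _).card := Finset.card_le_card hsubBad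
        _ ≤ (Bad ∩ smallF).card + _ := Finset.card_union_le _ _
        _ ≤ (Bad ∩ smallF).card + 1 := by exact Nat.add_le_add_left hbig1 _
    -- the threshold
    have ht_le : t ≤ (Bad ∩ smallF).card := by
      have hcc' : (0.6 * (c:ℝ) + (n:ℝ) ^ ((4:ℝ)/5))
          < (Nat.card G'.ConnectedComponent : ℝ) := hω
      have hcountR : 2 * (Nat.card G'.ConnectedComponent : ℝ) ≤ (c:ℝ) + Bad.card := by
        exact_mod_cast hcount
      have hBs : ((Bad ∩ smallF).card : ℝ) + 1 ≥ (Bad.card : ℝ) := by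
        exact_mod_cast hBadsplit
      have hxlt : x < ((Bad ∩ smallF).card : ℝ) := by
        rw [hx_def]
        linarith
      have : (⌊x⌋₊ : ℝ) < ((Bad ∩ smallF).card : ℝ) :=
        lt_of_le_of_lt (Nat.floor_le hx0) hxlt
      rw [ht_def]
      exact_mod_cast Nat.lt_iff_add_one_le.1 (by exact_mod_cast this)
    obtain ⟨S, hSsub, hScard⟩ := Finset.exists_subset_card_eq ht_le
    have hSsmall : S ∈ smallF.powersetCard t :=
      Finset.mem_powersetCard.2 ⟨hSsub.trans (Finset.inter_subset_right), hScard⟩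
    refine Set.mem_biUnion hSsmall ?_
    rw [hAS]
    intro e he
    rw [hES] at he
    obtain ⟨K, hKS, heK⟩ := Finset.mem_biUnion.1 he
    by_contra hωe
    rw [Bool.not_eq_false] at hωe
    obtain ⟨⟨heH, heF⟩, a, b, rfl, hma, hmb⟩ := mem_crossEdges_iff.1 heK
    have hKBad : K ∈ Bad := (Finset.mem_inter.1 (hSsub hKS)).1
    have hadj : G'.Adj a b := by
      refine Or.inr ?_
      exact (⟨(SimpleGraph.mem_edgeSet H |>.1 heH).ne, ⟨heH, heF⟩, hωe⟩ :
        a ≠ b ∧ s(a, b) ∈ H.edgeSet \ F.edgeSet ∧ ω s(a, b) = true)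
    exact hmb ((Finset.mem_filter.1 hKBad).2 a b hma hadj)
  -- measure bound
  have hbound : μ Evᶜ ≤ ((n : ENNReal) ^ 4)⁻¹ := by
    refine le_trans (measure_mono hsub) ?_
    refine le_trans (measure_biUnion_finset_le _ _) ?_
    have hper : ∀ S ∈ smallF.powersetCard t,
        μ (AS S) ≤ ENNReal.ofReal (Real.exp (-(3 * t))) := by
      intro S hS
      obtain ⟨hSsub, hScard⟩ := Finset.mem_powersetCard.1 hS
      -- all edges in ES S are H \ F edges
      have hESsub : ∀ e ∈ ES S, e ∈ H.edgeSet \ F.edgeSet := by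
        intro e he
        obtain ⟨K, _, heK⟩ := Finset.mem_biUnion.1 he
        exact (mem_crossEdges_iff.1 heK).1
      have hqe : ∀ e ∈ ES S, μfac e {false} = 1 - ENNReal.ofReal p := by
        intro e he
        rw [hμfac]
        dsimp only
        rw [if_pos (hESsub e he)]
        exact bernoulliMeasure_false p
      have heval : μ (AS S) = (1 - ENNReal.ofReal p) ^ (ES S).card := by
        rw [hμ, hAS]
        exact pi_allFalse μfac (ES S) _ hqe
      -- lower bound on the number of edges
      set q0 : ℕ := ⌈α * n / 2⌉₊ with hq0
      have hcrossK : ∀ K ∈ S, q0 ≤ (crossEdges F H K).card := by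
        intro K hK
        have hKsmall : 2 * Nat.card K.supp ≤ n :=
          (Finset.mem_filter.1 (hSsub hK)).2
        have hK1 : 1 ≤ Nat.card K.supp := by
          have : K.supp.Nonempty := by
            obtain ⟨v, hv⟩ := K.exists_rep
            exact ⟨v, by rw [SimpleGraph.ConnectedComponent.mem_supp_iff]; exact hv⟩
          haveI : Nonempty K.supp := this.to_subtype
          exact Nat.card_pos
        have hKn : Nat.card K.supp ≤ n := by
          rw [hn_def, ← Nat.card_eq_fintype_card]
          exact Nat.card_le_card_of_injective (fun v => (v : V)) Subtype.val_injective
        have hreal : α * n / 2 ≤ ((crossEdges F H K).card : ℝ) := by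
          refine le_trans ?_ (crossEdges_card_ge F H hrob K)
          have hk1 : (1:ℝ) ≤ (Nat.card K.supp : ℝ) := by exact_mod_cast hK1
          have hk2 : 2 * (Nat.card K.supp : ℝ) ≤ (n:ℝ) := by exact_mod_cast hKsmall
          rw [← hn_def]
          have hnk : (0:ℝ) ≤ (n:ℝ) - (Nat.card K.supp : ℝ) := by linarith
          nlinarith [mul_nonneg (mul_nonneg hα.le
              (by linarith : (0:ℝ) ≤ (Nat.card K.supp : ℝ) - 1)) hnk,
            mul_nonneg hα.le
              (by linarith : (0:ℝ) ≤ (n:ℝ) - 2 * (Nat.card K.supp : ℝ))]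
        rw [hq0]
        exact Nat.ceil_le.2 hreal
      have hdouble : S.card * q0 ≤ (ES S).card * 2 := by
        refine Finset.card_mul_le_card_mul (fun K e => e ∈ crossEdges F H K) ?_ ?_
        · intro K hK
          refine le_trans (hcrossK K hK) (Finset.card_le_card ?_)
          intro e he
          rw [Finset.mem_bipartiteAbove]
          exact ⟨Finset.mem_biUnion.2 ⟨K, hK, he⟩, he⟩
        · intro e he
          obtain ⟨K₀, hK₀S, heK₀⟩ := Finset.mem_biUnion.1 he
          obtain ⟨_, a, b, rfl, _, _⟩ := mem_crossEdges_iff.1 heK₀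
          have hsubset : S.bipartiteBelow (fun K e => e ∈ crossEdges F H K) s(a, b)
              ⊆ {F.connectedComponentMk a, F.connectedComponentMk b} := by
            intro K hK
            rw [Finset.mem_bipartiteBelow] at hK
            obtain ⟨_, a', b', hab', hma', _⟩ := mem_crossEdges_iff.1 hK.2
            rw [Sym2.eq_iff] at hab'
            rcases hab' with ⟨rfl, rfl⟩ | ⟨rfl, rfl⟩
            · exact Finset.mem_insert.2 (Or.inl hma'.symm)
            · exact Finset.mem_insert.2 (Or.inr (Finset.mem_singleton.2 hma'.symm))
          refine le_trans (Finset.card_le_card hsubset) ?_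
          refine le_trans (Finset.card_insert_le _ _) ?_
          simp
      -- numeric bound
      have hkreal : 3 * (t:ℝ) ≤ p * ((ES S).card : ℝ) := by
        have hd : (t:ℝ) * (q0:ℝ) ≤ ((ES S).card : ℝ) * 2 := by
          rw [← hScard]
          exact_mod_cast hdouble
        have hq0ge : α * n / 2 ≤ (q0:ℝ) := Nat.le_ceil _
        have hpan : p * (α * n) = 12 := by
          rw [hp_def]
          field_simp
        have htnn : (0:ℝ) ≤ (t:ℝ) := Nat.cast_nonneg t
        have s1 : p * ((t:ℝ) * (q0:ℝ)) ≤ p * (((ES S).card : ℝ) * 2) :=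
          mul_le_mul_of_nonneg_left hd hp0.le
        have s2 : (α * n / 2) * (t:ℝ) ≤ (q0:ℝ) * (t:ℝ) :=
          mul_le_mul_of_nonneg_right hq0ge htnn
        have s3 : p * ((α * n / 2) * (t:ℝ)) ≤ p * ((q0:ℝ) * (t:ℝ)) :=
          mul_le_mul_of_nonneg_left s2 hp0.le
        have e1 : p * ((α * n / 2) * (t:ℝ)) = 6 * t := by
          have e2 : p * ((α * n / 2) * (t:ℝ)) = (p * (α * n)) * (t:ℝ) / 2 := by ring
          rw [e2, hpan]; ring
        nlinarith [s1, s3, e1]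
      have hexp : (1 - ENNReal.ofReal p) ^ (ES S).card
          ≤ ENNReal.ofReal (Real.exp (-(3 * t))) := by
        have h1 : (1 - ENNReal.ofReal p) = ENNReal.ofReal (1 - p) := by
          rw [ENNReal.ofReal_sub 1 hp0.le, ENNReal.ofReal_one]
        rw [h1, ← ENNReal.ofReal_pow (by linarith)]
        apply ENNReal.ofReal_le_ofReal
        have h2 : (1 - p) ^ (ES S).card ≤ Real.exp (-p) ^ (ES S).card :=
          pow_le_pow_left₀ (by linarith) (Real.one_sub_le_exp_neg p) _
        refine h2.trans ?_
        rw [← Real.exp_nat_mul]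
        apply Real.exp_le_exp.2
        nlinarith [hkreal]
      rw [heval]
      exact hexp
    refine le_trans (Finset.sum_le_sum hper) ?_
    rw [Finset.sum_const, Finset.card_powersetCard, nsmul_eq_mul]
    -- binomial bound
    have hchle : (smallF.card.choose t : ENNReal) ≤ (c.choose t : ENNReal) := by
      have h1 : smallF.card ≤ c := by
        rw [hcF]
        exact le_trans (Finset.card_filter_le _ _) (le_of_eq Finset.card_univ)
      exact_mod_cast Nat.choose_le_choose t h1
    refine le_trans (mul_le_mul_of_nonneg_right hchle zero_le) ?_
    have hreal := final_real n c t hbign hc4 (by rw [← hx_def]; exact htx) ht0 hnn0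
    calc (c.choose t : ENNReal) * ENNReal.ofReal (Real.exp (-(3 * t)))
        = ENNReal.ofReal ((c.choose t : ℝ) * Real.exp (-(3 * t))) := by
          rw [ENNReal.ofReal_mul (Nat.cast_nonneg _)]
          congr 1
          rw [ENNReal.ofReal_natCast]
      _ ≤ ENNReal.ofReal ((((n:ℝ)) ^ 4)⁻¹) := ENNReal.ofReal_le_ofReal hreal
      _ = ((n : ENNReal) ^ 4)⁻¹ := by
          rw [ENNReal.ofReal_inv_of_pos (by positivity), ENNReal.ofReal_pow (by positivity),
            ENNReal.ofReal_natCast]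
  -- conclude
  rw [tsub_le_iff_right]
  have huniv : (1:ENNReal) = μ Set.univ := (measure_univ).symm
  calc (1:ENNReal) = μ Set.univ := huniv
    _ ≤ μ Ev + μ Evᶜ := by
        have := measure_union_le (μ := μ) Ev Evᶜ
        rwa [Set.union_compl_self] at this
    _ ≤ μ Ev + ((n : ENNReal) ^ 4)⁻¹ := add_le_add le_rfl hbound
end
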